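/- Let p ∈ (2,6) and define h : (0,∞) → ℝ by h(x) = x · ∫_{√(p/(p+2x²))}^{1} (1−s²)^{(4−p)/(p−2)} ds. Then h is differentiable with h'(x) = ∫_{√(p/(p+2x²))}^{1} (1−s²)^{(4−p)/(p−2)} ds + 2^{2/(p−2)}·√p·x^{4/(p−2)} / (p+2x²)^{(p+2)/(2(p−2))} > 0 for every x > 0; in particular h is strictly increasing on (0,∞). -/

import Mathlib

open Set Filter
open MeasureTheory intervalIntegral

noncomputable section

/-- The function `h(x) = x ∫_{√(p/(p+2x²))}^1 (1-s²)^{(4-p)/(p-2)} ds`. -/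
def hFun (p : ℝ) (x : ℝ) : ℝ :=
  x * ∫ s in Real.sqrt (p / (p + 2 * x ^ 2))..(1 : ℝ),
    (1 - s ^ 2) ^ ((4 - p) / (p - 2))

/-- The claimed derivative of `h`. -/
def hFunDeriv (p : ℝ) (x : ℝ) : ℝ :=
  (∫ s in Real.sqrt (p / (p + 2 * x ^ 2))..(1 : ℝ),
      (1 - s ^ 2) ^ ((4 - p) / (p - 2))) +
    2 ^ ((2 : ℝ) / (p - 2)) * Real.sqrt p * x ^ ((4 : ℝ) / (p - 2)) /
      (p + 2 * x ^ 2) ^ ((p + 2) / (2 * (p - 2)))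

lemma aux_intInt {α : ℝ} (hα : -1 < α) :
    IntervalIntegrable (fun s => (1 - s ^ 2) ^ α) volume 0 1 := by
  have h1 : IntervalIntegrable (fun s : ℝ => (1 - s) ^ α) volume 0 1 := by
    have := (intervalIntegrable_rpow' hα (a := 0) (b := 1)).comp_sub_left 1
    simpa using this.symm
  have h2 : IntervalIntegrable (fun s : ℝ => (1 - s) ^ α * (1 + s) ^ α) volume 0 1 := by
    apply h1.mul_continuousOn
    apply ContinuousOn.rpow_const (by fun_prop)
    intro s hs
    rw [Set.uIcc_of_le (by norm_num)] at hs
    left; nlinarith [hs.1]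
  rw [intervalIntegrable_iff_integrableOn_Ioc_of_le (by norm_num)] at h2 ⊢
  apply h2.congr_fun ?_ measurableSet_Ioc
  intro s hs
  show (1 - s) ^ α * (1 + s) ^ α = (1 - s ^ 2) ^ α
  rw [← Real.mul_rpow (by nlinarith [hs.2]) (by nlinarith [hs.1.le])]
  congr 1; ring

/-- `h` is differentiable on `(0,∞)` with the explicit positive derivative
`h'(x) = ∫_{√(p/(p+2x²))}^1 (1-s²)^{(4-p)/(p-2)} ds
  + 2^{2/(p-2)} √p x^{4/(p-2)} / (p+2x²)^{(p+2)/(2(p-2))}`;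
in particular `h` is strictly increasing on `(0,∞)`. -/
theorem statement_18 (p : ℝ) (hp2 : 2 < p) (hp6 : p < 6) :
    (∀ x : ℝ, 0 < x →
      HasDerivAt (hFun p) (hFunDeriv p x) x ∧ 0 < hFunDeriv p x) ∧
    StrictMonoOn (hFun p) (Ioi 0) := by
  have hp0 : 0 < p := by linarith
  have hpm2 : (0:ℝ) < p - 2 := by linarith
  set α := (4 - p) / (p - 2) with hαdef
  have hα : -1 < α := by
    rw [hαdef, neg_lt, ← neg_div, div_lt_one hpm2]
    linarith
  have key : ∀ x : ℝ, 0 < x →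
      HasDerivAt (hFun p) (hFunDeriv p x) x ∧ 0 < hFunDeriv p x := by
    intro x hx
    set u := p + 2 * x ^ 2 with hudef
    have hu : 0 < u := by positivity
    have hplt : p < u := by nlinarith
    have hq1 : p / u < 1 := (div_lt_one hu).2 hplt
    have hq0 : 0 < p / u := by positivity
    set g := Real.sqrt (p / u) with hgdef
    have hg0 : 0 < g := Real.sqrt_pos.2 hq0
    have hg1 : g < 1 := by
      rw [hgdef, show (1:ℝ) = Real.sqrt 1 by simp]
      exact Real.sqrt_lt_sqrt hq0.le (by simpa using hq1)
    have hgsq : g ^ 2 = p / u := Real.sq_sqrt hq0.le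
    -- interval integrability on g..1
    have hint : IntervalIntegrable (fun s => (1 - s ^ 2) ^ α) volume g 1 := by
      apply (aux_intInt hα).mono_set
      rw [Set.uIcc_of_le hg1.le, Set.uIcc_of_le (by norm_num)]
      exact Set.Icc_subset_Icc (by linarith) le_rfl
    -- continuity of integrand at g
    have hcont : ContinuousAt (fun s : ℝ => (1 - s ^ 2) ^ α) g := by
      apply ContinuousAt.rpow_const (by fun_prop)
      left; nlinarith
    have hmeas : StronglyMeasurableAtFilter (fun s : ℝ => (1 - s ^ 2) ^ α) (nhds g) volume := by
      refine ContinuousOn.stronglyMeasurableAtFilter (s := Ioo (-1 : ℝ) 1) isOpen_Ioo ?_ g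
        ⟨by linarith, hg1⟩
      apply ContinuousOn.rpow_const (by fun_prop)
      rintro s ⟨h1, h2⟩
      left; nlinarith
    -- FTC derivative of integral in lower endpoint
    have hF : HasDerivAt (fun y => ∫ s in y..(1:ℝ), (1 - s ^ 2) ^ α)
        (-(1 - g ^ 2) ^ α) g :=
      integral_hasDerivAt_left hint hmeas hcont
    -- derivative of g as a function of x
    have hinner : HasDerivAt (fun x : ℝ => p / (p + 2 * x ^ 2)) (-(p * (4 * x)) / u ^ 2) x := by
      have h1 : HasDerivAt (fun x : ℝ => p + 2 * x ^ 2) (4 * x) x := by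
        have := ((hasDerivAt_pow 2 x).const_mul 2).const_add p
        exact this.congr_deriv (by norm_num <;> ring)
      have := (hasDerivAt_const x p).div h1 (ne_of_gt hu)
      exact this.congr_deriv (by rw [hudef]; ring)
    have hgder : HasDerivAt (fun x : ℝ => Real.sqrt (p / (p + 2 * x ^ 2)))
        (-(p * (4 * x)) / u ^ 2 / (2 * g)) x := by
      have := hinner.sqrt (ne_of_gt hq0)
      simpa [hgdef] using this
    -- chain rule and product rule
    have hchain : HasDerivAt (fun x : ℝ => ∫ s in Real.sqrt (p / (p + 2 * x ^ 2))..(1:ℝ),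
        (1 - s ^ 2) ^ α) (-(1 - g ^ 2) ^ α * (-(p * (4 * x)) / u ^ 2 / (2 * g))) x :=
      by have := HasDerivAt.comp x hF hgder; exact this
    have hprod : HasDerivAt (hFun p)
        (1 * (∫ s in g..(1:ℝ), (1 - s ^ 2) ^ α)
          + x * (-(1 - g ^ 2) ^ α * (-(p * (4 * x)) / u ^ 2 / (2 * g)))) x := by
      have := (hasDerivAt_id x).mul hchain
      exact this
    -- identify derivative value
    have hval : hFunDeriv p x =
        1 * (∫ s in g..(1:ℝ), (1 - s ^ 2) ^ α)
          + x * (-(1 - g ^ 2) ^ α * (-(p * (4 * x)) / u ^ 2 / (2 * g))) := by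
      rw [hFunDeriv]
      have h1g : (1 : ℝ) - g ^ 2 = 2 * x ^ 2 / u := by
        rw [hgsq]; field_simp; rw [hudef]; ring
      have hgu : g = Real.sqrt p / Real.sqrt u := by
        rw [hgdef, Real.sqrt_div hp0.le]
      have hne : p - 2 ≠ 0 := ne_of_gt hpm2
      have e1 : (2:ℝ) / (p - 2) = α + 1 := by rw [hαdef]; field_simp; norm_num
      have e2 : (4:ℝ) / (p - 2) = 2 * α + 2 := by rw [hαdef]; field_simp; ring
      have e3 : (p + 2) / (2 * (p - 2)) = α + 3/2 := by rw [hαdef]; field_simp; ring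
      simp only [← hudef, ← hgdef, ← hαdef, one_mul]
      congr 1
      have hsu : Real.sqrt u = u ^ ((1:ℝ)/2) := Real.sqrt_eq_rpow u
      have hx2 : (2 * x ^ 2 / u) ^ α = 2 ^ α * x ^ (2 * α) / u ^ α := by
        rw [Real.div_rpow (by positivity) hu.le,
          Real.mul_rpow (by norm_num) (by positivity),
          ← Real.rpow_natCast x 2, ← Real.rpow_mul hx.le]
        norm_num [mul_comm]
      rw [e1, e2, e3, h1g, hx2, hgu, hsu]
      rw [Real.rpow_add hu, Real.rpow_add hx, Real.rpow_add (by norm_num : (0:ℝ) < 2),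
        Real.rpow_one]
      rw [show u ^ ((3:ℝ)/2) = u * u ^ ((1:ℝ)/2) by
        rw [show (3:ℝ)/2 = 1 + 1/2 by norm_num, Real.rpow_add hu, Real.rpow_one]]
      rw [show x ^ ((2:ℝ)) = x ^ (2:ℕ) by rw [← Real.rpow_natCast x 2]; norm_num]
      have hS : Real.sqrt p * Real.sqrt p = p := Real.mul_self_sqrt hp0.le
      have hV : u ^ ((1:ℝ)/2) * u ^ ((1:ℝ)/2) = u := by
        rw [← Real.rpow_add hu]; norm_num
      have h2a : (0:ℝ) < 2 ^ α := by positivity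
      have hxa : (0:ℝ) < x ^ (2*α) := by positivity
      have hua : (0:ℝ) < u ^ α := by positivity
      have hu12 : (0:ℝ) < u ^ ((1:ℝ)/2) := by positivity
      have hsqp : (0:ℝ) < Real.sqrt p := Real.sqrt_pos.2 hp0
      field_simp
      ring_nf
      rw [Real.sq_sqrt hp0.le,
        show (u ^ ((1:ℝ)/2)) ^ (2:ℕ) = u by
          rw [← Real.rpow_natCast _ 2, ← Real.rpow_mul hu.le]; norm_num]
      ring
    constructor
    · rw [hval]; exact hprod
    · rw [hFunDeriv]
      have hnn : 0 ≤ ∫ s in Real.sqrt (p / (p + 2 * x ^ 2))..(1:ℝ), (1 - s ^ 2) ^ ((4-p)/(p-2)) := by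
        apply intervalIntegral.integral_nonneg
        · show Real.sqrt (p / (p + 2 * x ^ 2)) ≤ 1
          exact hg1.le
        · intro s hs
          apply Real.rpow_nonneg
          have hs1 : s ≤ 1 := hs.2
          have hs0 : 0 ≤ s := le_trans hg0.le hs.1
          nlinarith
      have hpos : 0 < 2 ^ ((2:ℝ)/(p-2)) * Real.sqrt p * x ^ ((4:ℝ)/(p-2)) /
          (p + 2 * x ^ 2) ^ ((p + 2)/(2*(p-2))) := by
        have := Real.sqrt_pos.2 hp0
        positivity
      linarith
  refine ⟨key, ?_⟩
  apply strictMonoOn_of_deriv_pos (convex_Ioi 0)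
  · intro x hx
    exact ((key x hx).1.continuousAt).continuousWithinAt
  · intro x hx
    rw [interior_Ioi] at hx
    rw [(key x hx).1.deriv]
    exact (key x hx).2
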